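/- Let T ∈ ℝ, let a, b, σ be positive real constants, let γ ≥ 0 and ψ ≥ 0, and set k(x) := √(a² + 2(1+b·x)·σ²). Then for every t ≤ T, min(ψ, (k(γ)−a)/σ²) ≤ Φ(t,T;ψ,γ) ≤ max(ψ, (k(γ)−a)/σ²). -/
import Mathlib


/-- k(x) := √(a² + 2(1+b·x)·σ²). -/
noncomputable def kfun (a b σ x : ℝ) : ℝ := Real.sqrt (a ^ 2 + 2 * (1 + b * x) * σ ^ 2)

/-- The explicit solution Φ(t,T;ψ,γ) of the Riccati equation with constant coefficient γ. -/
noncomputable def Phi (a b σ ψ γ T t : ℝ) : ℝ :=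
  ((kfun a b σ γ - a) / σ ^ 2 * (ψ + (a + kfun a b σ γ) / σ ^ 2) +
      (a + kfun a b σ γ) / σ ^ 2 * (ψ + (a - kfun a b σ γ) / σ ^ 2) *
        Real.exp (-(kfun a b σ γ) * (T - t))) /
    ((ψ + (a + kfun a b σ γ) / σ ^ 2) +
      ((kfun a b σ γ - a) / σ ^ 2 - ψ) * Real.exp (-(kfun a b σ γ) * (T - t)))

lemma phi_aux (ψ c d E : ℝ) (hψ : 0 ≤ ψ) (hc : 0 < c) (hd : 0 < d)
    (hE0 : 0 < E) (hE1 : E ≤ 1) :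
    min ψ c ≤ (c * (ψ + d) + d * (ψ - c) * E) / ((ψ + d) + (c - ψ) * E) ∧
    (c * (ψ + d) + d * (ψ - c) * E) / ((ψ + d) + (c - ψ) * E) ≤ max ψ c := by
  have hD : 0 < (ψ + d) + (c - ψ) * E := by
    nlinarith [mul_le_of_le_one_right hψ hE1, mul_nonneg hc.le hE0.le]
  rcases le_total ψ c with h | h
  · rw [min_eq_left h, max_eq_right h]
    constructor
    · rw [le_div_iff₀ hD]
      nlinarith [mul_nonneg (mul_nonneg (sub_nonneg.2 h) (by linarith : (0:ℝ) ≤ ψ + d))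
        (sub_nonneg.2 hE1)]
    · rw [div_le_iff₀ hD]
      nlinarith [mul_nonneg (mul_nonneg (sub_nonneg.2 h) hE0.le)
        (by linarith : (0:ℝ) ≤ c + d)]
  · rw [min_eq_right h, max_eq_left h]
    constructor
    · rw [le_div_iff₀ hD]
      nlinarith [mul_nonneg (mul_nonneg (sub_nonneg.2 h) hE0.le)
        (by linarith : (0:ℝ) ≤ c + d)]
    · rw [div_le_iff₀ hD]
      nlinarith [mul_nonneg (mul_nonneg (sub_nonneg.2 h) (by linarith : (0:ℝ) ≤ ψ + d))
        (sub_nonneg.2 hE1)]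

/-- for a, b, σ > 0, γ ≥ 0, ψ ≥ 0 and t ≤ T,
min(ψ, (k(γ)−a)/σ²) ≤ Φ(t,T;ψ,γ) ≤ max(ψ, (k(γ)−a)/σ²). -/
theorem Phi_bounds
    (T a b σ γ ψ : ℝ) (ha : 0 < a) (hb : 0 < b) (hσ : 0 < σ)
    (hγ : 0 ≤ γ) (hψ : 0 ≤ ψ) :
    ∀ t ≤ T,
      min ψ ((kfun a b σ γ - a) / σ ^ 2) ≤ Phi a b σ ψ γ T t ∧
      Phi a b σ ψ γ T t ≤ max ψ ((kfun a b σ γ - a) / σ ^ 2) := by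
  intro t ht
  have hs : (0:ℝ) < σ ^ 2 := by positivity
  have hak : a < kfun a b σ γ := by
    have h1 : a ^ 2 < a ^ 2 + 2 * (1 + b * γ) * σ ^ 2 := by
      nlinarith [mul_nonneg hb.le hγ]
    calc a = Real.sqrt (a ^ 2) := (Real.sqrt_sq ha.le).symm
      _ < kfun a b σ γ := Real.sqrt_lt_sqrt (by positivity) h1
  have hk0 : (0:ℝ) < kfun a b σ γ := ha.trans hak
  have hE1 : Real.exp (-(kfun a b σ γ) * (T - t)) ≤ 1 := by
    rw [Real.exp_le_one_iff]
    nlinarith [mul_nonneg hk0.le (sub_nonneg.2 ht)]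
  have hPhi : Phi a b σ ψ γ T t =
      ((kfun a b σ γ - a) / σ ^ 2 * (ψ + (a + kfun a b σ γ) / σ ^ 2) +
        (a + kfun a b σ γ) / σ ^ 2 * (ψ - (kfun a b σ γ - a) / σ ^ 2) *
          Real.exp (-(kfun a b σ γ) * (T - t))) /
      ((ψ + (a + kfun a b σ γ) / σ ^ 2) +
        ((kfun a b σ γ - a) / σ ^ 2 - ψ) * Real.exp (-(kfun a b σ γ) * (T - t))) := by
    rw [Phi]; ring_nf
  rw [hPhi]
  exact phi_aux ψ _ _ _ hψ (div_pos (by linarith) hs) (div_pos (by linarith) hs)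
    (Real.exp_pos _) hE1
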